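/- With the SBP-SAT semi-discretization of the cable-soma problem (penalty coefficients σ₀ = μ a₀² and σ_L = −μ/η) the discrete weighted energy E(t) = ‖√A u‖²_P + (μ/η) u_N² is nonincreasing in time; consequently the scheme is stable: ‖√A u(t)‖²_P ≤ E(0) for all t ≥ 0. -/

import Mathlib

open Matrix

/-- Stability of the SBP-SAT scheme for the cable-soma problem: with penalties
`σ₀ = μ a₀²`, `σ_L = −μ/η`, the discrete weighted energy
`E(t) = ‖√A u‖²_P + (μ/η) u_N²` is nonincreasing on `t ≥ 0`, and consequently
`‖√A u(t)‖²_P ≤ E(0)` for all `t ≥ 0`. -/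
theorem sbp_sat_cable_soma_stability
    (n : ℕ) (hn : 0 < n)
    (p : Fin (n + 1) → ℝ) (hp : ∀ i, 0 < p i)
    (P : Matrix (Fin (n + 1)) (Fin (n + 1)) ℝ) (hPdef : P = Matrix.diagonal p)
    (Q : Matrix (Fin (n + 1)) (Fin (n + 1)) ℝ)
    (hQ : Q + Qᵀ = Matrix.diagonal
      (fun i => if i = 0 then (-1 : ℝ) else if i = Fin.last n then 1 else 0))
    (a : Fin (n + 1) → ℝ) (ha : ∀ i, 0 < a i)
    (g : ℝ → Fin (n + 1) → ℝ) (gmin : ℝ) (hgmin : 0 < gmin)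
    (hg : ∀ t i, gmin ≤ g t i)
    (μ η C : ℝ) (hμ : 0 < μ) (hη : 0 < η) (hC : 0 < C)
    (u ut : ℝ → Fin (n + 1) → ℝ)
    (hut : ∀ t i, HasDerivAt (fun s => u s i) (ut t i) t)
    (hode : ∀ t,
      (Matrix.diagonal a).mulVec (ut t)
        = μ • (P⁻¹ * Q).mulVec (fun i => (a i) ^ 2 * ((P⁻¹ * Q).mulVec (u t)) i)
          - (1 / C) • (fun i => a i * g t i * u t i)
          + (μ * (a 0) ^ 2 * ((P⁻¹ * Q).mulVec (u t)) 0) •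
              P⁻¹.mulVec (Pi.single 0 1)
          + (-(μ / η) * (ut t (Fin.last n)
              + η * (a (Fin.last n)) ^ 2 * ((P⁻¹ * Q).mulVec (u t)) (Fin.last n)
              + (1 / C) * g t (Fin.last n) * u t (Fin.last n))) •
              P⁻¹.mulVec (Pi.single (Fin.last n) 1)) :
    AntitoneOn
      (fun s => (fun i => Real.sqrt (a i) * u s i) ⬝ᵥ
          P.mulVec (fun i => Real.sqrt (a i) * u s i)
        + (μ / η) * (u s (Fin.last n)) ^ 2) (Set.Ici 0) ∧
    ∀ t ≥ (0:ℝ),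
      (fun i => Real.sqrt (a i) * u t i) ⬝ᵥ
          P.mulVec (fun i => Real.sqrt (a i) * u t i)
        ≤ (fun i => Real.sqrt (a i) * u 0 i) ⬝ᵥ
            P.mulVec (fun i => Real.sqrt (a i) * u 0 i)
          + (μ / η) * (u 0 (Fin.last n)) ^ 2 := by
  have hp' : ∀ i, p i ≠ 0 := fun i => (hp i).ne'
  set N := Fin.last n with hN
  have h0N : (0 : Fin (n+1)) ≠ N := by
    simp [hN, Fin.ext_iff, Fin.last]
    omega
  -- inverse of P
  have hPinv : P⁻¹ = Matrix.diagonal (fun i => (p i)⁻¹) := by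
    rw [hPdef]
    refine Matrix.inv_eq_right_inv ?_
    rw [Matrix.diagonal_mul_diagonal]
    convert Matrix.diagonal_one
    simp [mul_inv_cancel₀ (hp' _)]
  have hPQ : ∀ (x : Fin (n+1) → ℝ) i,
      ((P⁻¹ * Q).mulVec x) i = (p i)⁻¹ * (Q.mulVec x) i := by
    intro x i
    rw [hPinv, ← Matrix.mulVec_mulVec, Matrix.mulVec_diagonal]
  have hPs : ∀ (j : Fin (n+1)) i,
      (P⁻¹.mulVec (Pi.single j 1)) i = (p i)⁻¹ * (Pi.single j 1 : Fin (n+1) → ℝ) i := by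
    intro j i
    rw [hPinv, Matrix.mulVec_diagonal]
  -- notation: v = P⁻¹ Q u, w = a² v
  set v : ℝ → Fin (n+1) → ℝ := fun t i => (p i)⁻¹ * (Q.mulVec (u t)) i with hv
  set w : ℝ → Fin (n+1) → ℝ := fun t i => (a i)^2 * v t i with hw
  -- Energy function
  set F : ℝ → ℝ := fun s => (∑ i, p i * (a i * (u s i)^2)) + (μ/η) * (u s N)^2 with hF
  have hFeq : ∀ s, ((fun i => Real.sqrt (a i) * u s i) ⬝ᵥ
      P.mulVec (fun i => Real.sqrt (a i) * u s i)) + (μ/η) * (u s N)^2 = F s := by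
    intro s
    rw [hF, hPdef]
    congr 1
    rw [dotProduct]
    refine Finset.sum_congr rfl (fun i _ => ?_)
    rw [Matrix.mulVec_diagonal]
    have : Real.sqrt (a i) * Real.sqrt (a i) = a i := Real.mul_self_sqrt (ha i).le
    ring_nf
    rw [Real.sq_sqrt (ha i).le]
    ring
  -- derivative of F
  set F' : ℝ → ℝ := fun t => (∑ i, p i * (a i * (2 * u t i * ut t i))) +
      (μ/η) * (2 * u t N * ut t N) with hF'
  have hderiv : ∀ t, HasDerivAt F (F' t) t := by
    intro t
    refine HasDerivAt.add (HasDerivAt.fun_sum fun i _ => ?_) ?_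
    · have h1 : HasDerivAt (fun s => (u s i)^2) (2 * u t i * ut t i) t := by
        have := (hut t i).fun_pow 2
        simpa [mul_comm, mul_assoc, mul_left_comm] using this
      simpa [mul_assoc] using (h1.const_mul (a i)).const_mul (p i)
    · have h1 : HasDerivAt (fun s => (u s N)^2) (2 * u t N * ut t N) t := by
        have := (hut t N).fun_pow 2
        simpa [mul_comm, mul_assoc, mul_left_comm] using this
      exact h1.const_mul (μ/η)
  -- rewrite the ODE argument
  have hwfun : ∀ t, (fun i => (a i)^2 * ((P⁻¹ * Q).mulVec (u t)) i) = w t := by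
    intro t; funext i; rw [hPQ]
  -- pointwise ODE
  have hode' : ∀ t i, a i * ut t i =
      μ * ((p i)⁻¹ * (Q.mulVec (w t)) i)
      - (1/C) * (a i * g t i * u t i)
      + (μ * (a 0)^2 * v t 0) * ((p i)⁻¹ * (Pi.single (0:Fin (n+1)) 1 : Fin (n+1) → ℝ) i)
      + (-(μ/η) * (ut t N + η * (a N)^2 * v t N + (1/C) * g t N * u t N)) *
          ((p i)⁻¹ * (Pi.single N 1 : Fin (n+1) → ℝ) i) := by
    intro t i
    have h := congrFun (hode t) i
    rw [hwfun t] at h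
    simp only [Pi.add_apply, Pi.sub_apply, Pi.smul_apply, smul_eq_mul,
      Matrix.mulVec_diagonal] at h
    rw [hPs 0 i, hPs N i, hPQ (w t) i, hPQ (u t) 0, hPQ (u t) N] at h
    exact h
  -- abbreviations
  set S : ℝ → ℝ := fun t => u t ⬝ᵥ (Q.mulVec (w t)) with hS
  set B : ℝ → ℝ := fun t => (Q.mulVec (u t)) ⬝ᵥ (w t) with hB
  set G : ℝ → ℝ := fun t => ∑ i, p i * (a i * g t i * (u t i)^2) with hG
  -- SBP identity
  have hSBP : ∀ t, S t = (-(u t 0 * w t 0) + u t N * w t N) - B t := by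
    intro t
    have h1 : u t ⬝ᵥ ((Q + Qᵀ).mulVec (w t)) = S t + B t := by
      rw [Matrix.add_mulVec, dotProduct_add, hS]
      congr 1
      rw [Matrix.dotProduct_mulVec, Matrix.vecMul_transpose, hB]
    have h2 : u t ⬝ᵥ ((Q + Qᵀ).mulVec (w t)) = -(u t 0 * w t 0) + u t N * w t N := by
      rw [hQ, dotProduct]
      have hterm : ∀ i : Fin (n+1), u t i * ((Matrix.diagonal
          (fun i => if i = 0 then (-1:ℝ) else if i = N then 1 else 0)).mulVec (w t)) i
          = (if i = (0:Fin (n+1)) then -(u t i * w t i) else 0)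
            + (if i = N then u t i * w t i else 0) := by
        intro i
        rw [Matrix.mulVec_diagonal]
        split_ifs with h1 h2
        · exact absurd (h1 ▸ h2) h0N
        · ring
        · ring
        · ring
      rw [Finset.sum_congr rfl (fun i _ => hterm i), Finset.sum_add_distrib]
      rw [Finset.sum_ite_eq' Finset.univ (0:Fin (n+1)) (fun i => -(u t i * w t i)),
        Finset.sum_ite_eq' Finset.univ N (fun i => u t i * w t i)]
      simp
    linarith [h1, h2]
  -- weighted sum of the ODE
  have hsum : ∀ t, ∑ i, p i * (u t i * (a i * ut t i)) =
      μ * S t - (1/C) * G t + (μ * (a 0)^2 * v t 0) * u t 0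
      + (-(μ/η) * (ut t N + η * (a N)^2 * v t N + (1/C) * g t N * u t N)) * u t N := by
    intro t
    have hterm : ∀ i : Fin (n+1), p i * (u t i * (a i * ut t i)) =
        μ * (u t i * (Q.mulVec (w t)) i) - (1/C) * (p i * (a i * g t i * (u t i)^2))
        + (μ * (a 0)^2 * v t 0) * (u t i * (Pi.single (0:Fin (n+1)) 1 : Fin (n+1) → ℝ) i)
        + (-(μ/η) * (ut t N + η * (a N)^2 * v t N + (1/C) * g t N * u t N)) *
            (u t i * (Pi.single N 1 : Fin (n+1) → ℝ) i) := by
      intro i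
      rw [hode' t i]
      have hpinv : p i * (p i)⁻¹ = 1 := mul_inv_cancel₀ (hp' i)
      linear_combination (u t i * (μ * (Q.mulVec (w t)) i
        + (μ * (a 0)^2 * v t 0) * (Pi.single (0:Fin (n+1)) 1 : Fin (n+1) → ℝ) i
        + (-(μ/η) * (ut t N + η * (a N)^2 * v t N + (1/C) * g t N * u t N)) *
            (Pi.single N 1 : Fin (n+1) → ℝ) i)) * hpinv
    rw [Finset.sum_congr rfl (fun i _ => hterm i)]
    simp only [Finset.sum_add_distrib, Finset.sum_sub_distrib]
    rw [← Finset.mul_sum, ← Finset.mul_sum, ← Finset.mul_sum, ← Finset.mul_sum]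
    have hs0 : ∑ i, u t i * (Pi.single (0:Fin (n+1)) 1 : Fin (n+1) → ℝ) i = u t 0 := by
      simp [Pi.single_apply, mul_ite, Finset.sum_ite_eq']
    have hsN : ∑ i, u t i * (Pi.single N 1 : Fin (n+1) → ℝ) i = u t N := by
      simp [Pi.single_apply, mul_ite, Finset.sum_ite_eq']
    rw [hs0, hsN]
    simp only [hS, hG, dotProduct]
  -- the derivative is nonpositive
  have hkey : ∀ t, F' t = -(2 * (μ * B t)) - 2 * ((1/C) * G t)
      - 2 * ((μ/(η*C)) * (g t N * (u t N)^2)) := by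
    intro t
    have e1 : F' t = 2 * (∑ i, p i * (u t i * (a i * ut t i)))
        + (μ/η) * (2 * u t N * ut t N) := by
      simp only [hF']
      rw [Finset.mul_sum]
      congr 1
      exact Finset.sum_congr rfl fun i _ => by ring
    rw [e1, hsum t, hSBP t]
    have e0 : w t 0 = (a 0)^2 * v t 0 := rfl
    have eN : w t N = (a N)^2 * v t N := rfl
    rw [e0, eN]
    linear_combination (-(2 * μ * u t N * (a N)^2 * v t N)) * mul_inv_cancel₀ hη.ne'
  have hF'le : ∀ t, F' t ≤ 0 := by
    intro t
    have hBpos : 0 ≤ B t := by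
      rw [hB]
      refine Finset.sum_nonneg fun i _ => ?_
      have : (Q.mulVec (u t)) i * w t i
          = (a i)^2 * ((p i)⁻¹ * ((Q.mulVec (u t)) i)^2) := by
        simp only [hw, hv]; ring
      rw [this]
      exact mul_nonneg (sq_nonneg _) (mul_nonneg (inv_nonneg.mpr (hp i).le) (sq_nonneg _))
    have hGpos : 0 ≤ G t := by
      rw [hG]
      refine Finset.sum_nonneg fun i _ => ?_
      have hgi : 0 ≤ g t i := le_trans hgmin.le (hg t i)
      exact mul_nonneg (hp i).le (mul_nonneg (mul_nonneg (ha i).le hgi) (sq_nonneg _))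
    have hgN : 0 ≤ g t N := le_trans hgmin.le (hg t N)
    have h3 : 0 ≤ (μ/(η*C)) * (g t N * (u t N)^2) := by positivity
    have h1 : 0 ≤ 2 * (μ * B t) := by positivity
    have h2 : 0 ≤ 2 * ((1/C) * G t) := by positivity
    rw [hkey t]
    linarith
  -- conclude
  have hmono : AntitoneOn F (Set.Ici 0) := by
    refine antitoneOn_of_deriv_nonpos (convex_Ici 0) ?_ ?_ ?_
    · exact fun x _ => ((hderiv x).differentiableAt.continuousAt).continuousWithinAt
    · exact fun x _ => (hderiv x).differentiableAt.differentiableWithinAt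
    · intro x _
      rw [(hderiv x).deriv]
      exact hF'le x
  constructor
  · have : (fun s => ((fun i => Real.sqrt (a i) * u s i) ⬝ᵥ
        P.mulVec (fun i => Real.sqrt (a i) * u s i)) + (μ/η) * (u s N)^2) = F :=
      funext hFeq
    rw [this]
    exact hmono
  · intro t ht
    have h1 : F t ≤ F 0 := hmono Set.self_mem_Ici ht ht
    have h2 := hFeq t
    have h3 := hFeq 0
    have h4 : 0 ≤ (μ/η) * (u t N)^2 := by positivity
    rw [← h2] at h1
    rw [← h3] at h1
    linarith
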